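/- Lovász's spectral formula: for a random walk on a connected graph G, H(x,y) = vol(G) · Σ_{k=2}^{n} (1/λ_k) · (v_{ky}^2/d_y - v_{kx} v_{ky}/√(d_x d_y)), where 0 = λ_1 < λ_2 ≤ … ≤ λ_n are the eigenvalues of the normalized Laplacian L = D^{-1/2}(D-A)D^{-1/2} with orthonormal eigenvectors v_1,…,v_n. -/

import Mathlib

open Matrix

/-- `H` is the vector of expected hitting times of the simple random walk on `G`. -/
def IsHittingTime {V : Type*} [Fintype V] (G : SimpleGraph V) [DecidableRel G.Adj]
    (H : V → V → ℝ) : Prop :=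
  (∀ y, H y y = 0) ∧
  ∀ x y, x ≠ y → H x y = 1 + (∑ z ∈ G.neighborFinset x, H z y) / (G.degree x)

/-- Chung's normalized Laplacian `𝓛 = D^{-1/2} (D - A) D^{-1/2}`. -/
noncomputable def normalizedLaplacian {V : Type*} [Fintype V] [DecidableEq V]
    (G : SimpleGraph V) [DecidableRel G.Adj] : Matrix V V ℝ :=
  fun u w => (G.lapMatrix ℝ) u w / (Real.sqrt (G.degree u) * Real.sqrt (G.degree w))

/-- Lovász's spectral formula for hitting times. -/
theorem lovasz_spectral_formula {V : Type*} [Fintype V] [DecidableEq V]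
    (G : SimpleGraph V) [DecidableRel G.Adj] (hG : G.Connected)
    (H : V → V → ℝ) (hH : IsHittingTime G H)
    (n : ℕ) (hn : Fintype.card V = n) (hn0 : 0 < n)
    (lam : Fin n → ℝ) (v : Fin n → V → ℝ)
    (hmono : Monotone lam) (h0 : lam ⟨0, hn0⟩ = 0)
    (hpos : ∀ k : Fin n, k ≠ ⟨0, hn0⟩ → 0 < lam k)
    (heig : ∀ k : Fin n, (normalizedLaplacian G) *ᵥ (v k) = lam k • (v k))
    (horth : ∀ k l : Fin n, (∑ i : V, v k i * v l i) = if k = l then (1 : ℝ) else 0)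
    (x y : V) :
    H x y = (∑ w : V, (G.degree w : ℝ)) *
      ∑ k ∈ Finset.univ \ {(⟨0, hn0⟩ : Fin n)}, (1 / lam k) *
        ((v k y) ^ 2 / (G.degree y : ℝ) -
          (v k x) * (v k y) / Real.sqrt ((G.degree x : ℝ) * (G.degree y : ℝ))) := by
  classical
  set k0 : Fin n := ⟨0, hn0⟩ with hk0
  -- trivial case: one vertex
  by_cases h2 : 1 < Fintype.card V
  case neg =>
    have hcard1 : Fintype.card V = 1 := le_antisymm (not_lt.mp h2) (by omega)
    have hsub : Subsingleton V := Fintype.card_le_one_iff_subsingleton.mp hcard1.le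
    obtain rfl : x = y := Subsingleton.elim x y
    have hsum : (∑ k ∈ Finset.univ \ {k0}, (1 / lam k) *
        ((v k x) ^ 2 / (G.degree x : ℝ) -
          (v k x) * (v k x) / Real.sqrt ((G.degree x : ℝ) * (G.degree x : ℝ)))) = 0 := by
      apply Finset.sum_eq_zero
      intro k hk
      exfalso
      rw [Finset.mem_sdiff, Finset.mem_singleton] at hk
      have hn1 : n = 1 := by omega
      exact hk.2 (by subst hn1; exact Subsingleton.elim k k0)
    rw [hH.1 x, hsum, mul_zero]
  case pos =>
  -- degrees are positive
  have hdeg : ∀ w : V, 0 < G.degree w := by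
    intro w
    rw [G.degree_pos_iff_exists_adj]
    obtain ⟨u, hu⟩ := Fintype.exists_ne_of_one_lt_card h2 w
    obtain ⟨p⟩ := hG.preconnected w u
    cases p with
    | nil => exact absurd rfl hu
    | cons h q => exact ⟨_, h⟩
  set d : V → ℝ := fun w => (G.degree w : ℝ) with hd
  have hdpos : ∀ w, 0 < d w := fun w => by exact Nat.cast_pos.mpr (hdeg w)
  set sd : V → ℝ := fun w => Real.sqrt (d w) with hsd
  have hsdpos : ∀ w, 0 < sd w := fun w => Real.sqrt_pos.mpr (hdpos w)
  have hsdsq : ∀ w, sd w * sd w = d w := fun w => Real.mul_self_sqrt (hdpos w).le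
  set vol : ℝ := ∑ w : V, d w with hvol
  have : Nonempty V := Fintype.card_pos_iff.mp (by omega)
  have hvolpos : 0 < vol := Finset.sum_pos (fun w _ => hdpos w) Finset.univ_nonempty
  set S : Finset (Fin n) := Finset.univ \ {k0} with hS
  set f : V → ℝ := fun u => vol * ∑ k ∈ S, (1 / lam k) *
      ((v k y) ^ 2 / d y - (v k u) * (v k y) / Real.sqrt (d u * d y)) with hf
  -- Step A: combinatorial Laplacian acting on rescaled eigenvectors
  have hlapvk : ∀ (k : Fin n) (u : V),
      (G.lapMatrix ℝ *ᵥ fun w => v k w / sd w) u = lam k * sd u * v k u := by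
    intro k u
    have h1 := congrFun (heig k) u
    simp only [mulVec, dotProduct, normalizedLaplacian, Pi.smul_apply, smul_eq_mul] at h1 ⊢
    have h2' : ∀ w : V, G.lapMatrix ℝ u w / (sd u * sd w) * v k w
        = (G.lapMatrix ℝ u w * (v k w / sd w)) / sd u := by
      intro w
      field_simp
    rw [Finset.sum_congr rfl (fun w _ => h2' w)] at h1
    rw [← Finset.sum_div] at h1
    have := (div_eq_iff (hsdpos u).ne').mp h1
    rw [this]; ring
  -- Step B: the kernel eigenvector is proportional to sqrt-degrees
  have hker : ∀ a b : V, v k0 a * v k0 b = sd a * sd b / vol := by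
    have hker0 : G.lapMatrix ℝ *ᵥ (fun w => v k0 w / sd w) = 0 := by
      ext u
      rw [hlapvk k0 u, h0]
      simp
    have hconst : ∀ a : V, v k0 a = (v k0 y / sd y) * sd a := by
      intro a
      have hc := G.lapMatrix_mulVec_eq_zero_iff_forall_reachable.mp
        hker0 a y (hG.preconnected a y)
      exact (div_eq_iff (hsdpos a).ne').mp hc
    set c : ℝ := v k0 y / sd y with hc
    have hc2 : c * c * vol = 1 := by
      have h := horth k0 k0
      rw [if_pos rfl] at h
      calc c * c * vol = ∑ i : V, v k0 i * v k0 i := by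
            rw [hvol, Finset.mul_sum]
            apply Finset.sum_congr rfl
            intro i _
            rw [hconst i, ← hsdsq i]
            ring
        _ = 1 := h
    intro a b
    rw [hconst a, hconst b]
    have hv0 : vol ≠ 0 := hvolpos.ne'
    field_simp
    linear_combination (sd a * sd b) * hc2
  -- Step C: completeness
  have hcomp : ∀ a b : V, (∑ k : Fin n, v k a * v k b) = if a = b then (1:ℝ) else 0 := by
    have e : Fin n ≃ V := (Fintype.equivFinOfCardEq hn).symm
    set M : Matrix (Fin n) V ℝ := fun k i => v k i with hM
    have hMMt : M * Mᵀ = 1 := by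
      ext k l
      rw [Matrix.mul_apply]
      simp only [Matrix.transpose_apply]
      simp only [hM]
      rw [horth k l, Matrix.one_apply]
    have hMtM : Mᵀ * M = 1 := (Matrix.mul_eq_one_comm_of_equiv e).mp hMMt
    intro a b
    have h := congrFun (congrFun hMtM a) b
    rw [Matrix.mul_apply] at h
    simp only [Matrix.transpose_apply] at h
    simp only [hM] at h
    rw [h, Matrix.one_apply]
  -- Step D: Laplacian applied to f
  set C : ℝ := vol * ∑ k ∈ S, (1 / lam k) * ((v k y) ^ 2 / d y) with hCdef
  set b : Fin n → ℝ := fun k => -vol * v k y / (lam k * sd y) with hbdef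
  have hlamS : ∀ k ∈ S, lam k ≠ 0 := by
    intro k hk
    rw [hS, Finset.mem_sdiff, Finset.mem_singleton] at hk
    exact (hpos k hk.2).ne'
  have hfdecomp : ∀ w, f w = C + ∑ k ∈ S, b k * (v k w / sd w) := by
    intro w
    have key : ∀ (t A vy vw sw sy vo : ℝ), sw ≠ 0 → sy ≠ 0 →
        vo * (t * (A - vw * vy / (sw * sy)))
          = vo * (t * A) + (t * (-vo * vy / sy)) * (vw / sw) := by
      intro t A vy vw sw sy vo hsw hsy
      field_simp
      ring
    have hterm : ∀ k ∈ S,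
        vol * ((1 / lam k) * ((v k y) ^ 2 / d y - v k w * v k y / Real.sqrt (d w * d y)))
        = vol * ((1 / lam k) * ((v k y) ^ 2 / d y)) + b k * (v k w / sd w) := by
      intro k hk
      have h1 := hlamS k hk
      have hb' : b k = (1 / lam k) * (-vol * v k y / sd y) := by
        rw [hbdef]
        rw [one_div_mul_eq_div, div_div, mul_comm (sd y) (lam k)]
      rw [Real.sqrt_mul (hdpos w).le, hb']
      exact key (1 / lam k) ((v k y) ^ 2 / d y) (v k y) (v k w) (sd w) (sd y) vol
        (hsdpos w).ne' (hsdpos y).ne'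
    calc f w = ∑ k ∈ S, vol * ((1 / lam k) *
          ((v k y) ^ 2 / d y - v k w * v k y / Real.sqrt (d w * d y))) := by
          simp only [hf]
          rw [Finset.mul_sum]
      _ = ∑ k ∈ S, (vol * ((1 / lam k) * ((v k y) ^ 2 / d y)) + b k * (v k w / sd w)) :=
          Finset.sum_congr rfl hterm
      _ = C + ∑ k ∈ S, b k * (v k w / sd w) := by
          rw [Finset.sum_add_distrib, hCdef, Finset.mul_sum]
  have hrow0 : ∀ u : V, ∑ w : V, G.lapMatrix ℝ u w = 0 := by
    intro u
    have := congrFun (G.lapMatrix_mulVec_const_eq_zero (R := ℝ)) u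
    simpa [mulVec, dotProduct] using this
  have hsumS : ∀ u : V, ∑ k ∈ S, v k u * v k y
      = (if u = y then (1:ℝ) else 0) - sd u * sd y / vol := by
    intro u
    have hsub : ({k0} : Finset (Fin n)) ⊆ Finset.univ := Finset.subset_univ _
    rw [hS, Finset.sum_sdiff_eq_sub hsub, Finset.sum_singleton, hcomp u y, hker u y]
  have hfval : ∀ u : V, (G.lapMatrix ℝ *ᵥ f) u = d u - (if u = y then vol else 0) := by
    intro u
    have hmv : (G.lapMatrix ℝ *ᵥ f) u = ∑ k ∈ S, b k * (lam k * sd u * v k u) := by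
      simp only [mulVec, dotProduct]
      calc ∑ w : V, G.lapMatrix ℝ u w * f w
          = ∑ w : V, (G.lapMatrix ℝ u w * C
              + ∑ k ∈ S, b k * (G.lapMatrix ℝ u w * (v k w / sd w))) := by
            apply Finset.sum_congr rfl
            intro w _
            rw [hfdecomp w, mul_add, Finset.mul_sum]
            congr 1
            apply Finset.sum_congr rfl
            intro k _
            ring
        _ = (∑ w : V, G.lapMatrix ℝ u w * C)
              + ∑ w : V, ∑ k ∈ S, b k * (G.lapMatrix ℝ u w * (v k w / sd w)) :=
            Finset.sum_add_distrib
        _ = ∑ k ∈ S, b k * (lam k * sd u * v k u) := by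
            rw [← Finset.sum_mul, hrow0 u, zero_mul, zero_add, Finset.sum_comm]
            apply Finset.sum_congr rfl
            intro k _
            rw [← Finset.mul_sum]
            congr 1
            have := hlapvk k u
            simpa [mulVec, dotProduct] using this
    rw [hmv]
    have hterm2 : ∀ k ∈ S, b k * (lam k * sd u * v k u)
        = (-vol * sd u / sd y) * (v k u * v k y) := by
      intro k hk
      rw [hbdef]
      have h1 := hlamS k hk
      have h3 := (hsdpos y).ne'
      field_simp [h1, h3]
    rw [Finset.sum_congr rfl hterm2, ← Finset.mul_sum, hsumS u]
    have h3 := (hsdpos y).ne'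
    have h4 := (hsdpos u).ne'
    have hv0 : vol ≠ 0 := hvolpos.ne'
    by_cases huy : u = y
    · subst huy
      rw [if_pos rfl, if_pos rfl, ← hsdsq u]
      field_simp
      ring
    · rw [if_neg huy, if_neg huy, ← hsdsq u]
      field_simp
      ring
  -- Step E: Laplacian applied to H · y, off y
  have hHval : ∀ u : V, u ≠ y → (G.lapMatrix ℝ *ᵥ fun w => H w y) u = d u := by
    intro u hu
    rw [SimpleGraph.lapMatrix_mulVec_apply]
    rw [hH.2 u y hu]
    have : (G.degree u : ℝ) ≠ 0 := (hdpos u).ne'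
    field_simp
    simp [hd]
  -- Step F: conclude via connectedness
  set g : V → ℝ := fun w => H w y - f w with hg
  have hlapg : G.lapMatrix ℝ *ᵥ g = 0 := by
    have hgeq : ∀ u, u ≠ y → (G.lapMatrix ℝ *ᵥ g) u = 0 := by
      intro u hu
      have : g = (fun w => H w y) - f := rfl
      rw [this, Matrix.mulVec_sub, Pi.sub_apply, hHval u hu, hfval u, if_neg hu]
      ring
    have hsum0 : ∑ u : V, (G.lapMatrix ℝ *ᵥ g) u = 0 := by
      simp only [mulVec, dotProduct]
      rw [Finset.sum_comm]
      apply Finset.sum_eq_zero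
      intro w _
      rw [← Finset.sum_mul]
      have : ∑ u : V, G.lapMatrix ℝ u w = 0 := by
        have hsymm := G.isSymm_lapMatrix (R := ℝ)
        have h1 : ∀ u : V, G.lapMatrix ℝ u w = G.lapMatrix ℝ w u := by
          intro u
          conv_lhs => rw [← hsymm]
          rfl
        rw [Finset.sum_congr rfl (fun u _ => h1 u)]
        have := congrFun (G.lapMatrix_mulVec_const_eq_zero (R := ℝ)) w
        simpa [mulVec, dotProduct] using this
      rw [this, zero_mul]
    have hy0 : (G.lapMatrix ℝ *ᵥ g) y = 0 := by
      have := Finset.add_sum_erase Finset.univ (fun u => (G.lapMatrix ℝ *ᵥ g) u)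
        (Finset.mem_univ y)
      rw [← this] at hsum0
      have hrest : ∑ u ∈ Finset.univ.erase y, (G.lapMatrix ℝ *ᵥ g) u = 0 :=
        Finset.sum_eq_zero (fun u hu => hgeq u (Finset.ne_of_mem_erase hu))
      rw [hrest] at hsum0
      linarith
    ext u
    by_cases hu : u = y
    · rw [hu]; exact hy0
    · exact hgeq u hu
  have hgconst : ∀ a b : V, g a = g b := by
    intro a b
    have := G.lapMatrix_mulVec_eq_zero_iff_forall_reachable.mp
      hlapg
    exact this a b (hG.preconnected a b)
  have hfy : f y = 0 := by
    have hterm : ∀ k ∈ S, (1 / lam k) *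
        ((v k y) ^ 2 / d y - (v k y) * (v k y) / Real.sqrt (d y * d y)) = 0 := by
      intro k _
      rw [Real.sqrt_mul_self (hdpos y).le, sq]
      ring
    simp only [hf]
    rw [Finset.sum_congr rfl hterm]
    simp
  have hgy : g y = 0 := by rw [hg]; simp [hH.1 y, hfy]
  have hgx : g x = 0 := (hgconst x y).trans hgy
  have hfin : H x y = f x := sub_eq_zero.mp hgx
  rw [hfin]
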